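/- arXiv:1604.02007 — 2 statements merged into one kernel-verified Lean document; each statement's English description precedes it below -/
import Mathlib

section
/- Let r > 0, M ≥ 0 and λ_1, …, λ_m > 0. Let φ̃ : Δ^m(0,r) → ℝ be a measurable function on the open polydisc Δ^m(0,r) = {ζ ∈ ℂ^m : |ζ_j| < r for all j} satisfying |φ̃(ζ) − Σ_{j=1}^m λ_j |ζ_j|²| ≤ M |ζ|³ for all ζ ∈ Δ^m(0,r). Then for every function h holomorphic on Δ^m(0,r): |h(0)|² · ∫_{Δ^m(0,r)} exp(−2 Σ_{j=1}^m λ_j |ζ_j|²) dV_m(ζ) ≤ exp(2 M m^{3/2} r³) · ∫_{Δ^m(0,r)} |h(ζ)|² e^{−2φ̃(ζ)} dV_m(ζ), the right-hand side being allowed to equal +∞. -/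
open MeasureTheory

/-- The Euclidean norm on `ℂ^m`. -/
noncomputable def euclNorm {m : ℕ} (z : Fin m → ℂ) : ℝ :=
  Real.sqrt (∑ j, ‖z j‖ ^ 2)

section AuxLemmas

open MeasureTheory Set Real
open scoped ENNReal

theorem lintegral_comp_polarCoord_symm' (g : ℝ × ℝ → ℝ≥0∞) :
    ∫⁻ p in polarCoord.target, ENNReal.ofReal p.1 * g (polarCoord.symm p) = ∫⁻ p, g p := by
  set B : ℝ × ℝ → ℝ × ℝ →L[ℝ] ℝ × ℝ := fun p =>
    LinearMap.toContinuousLinearMap (Matrix.toLin (Module.Basis.finTwoProd ℝ) (Module.Basis.finTwoProd ℝ)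
      !![Real.cos p.2, -p.1 * Real.sin p.2; Real.sin p.2, p.1 * Real.cos p.2])
  have A : ∀ p ∈ polarCoord.target, HasFDerivWithinAt polarCoord.symm (B p) polarCoord.target p :=
    fun p _ => (show HasFDerivAt _ (B p) p from hasFDerivAt_polarCoord_symm p).hasFDerivWithinAt
  have B_det : ∀ p, (B p).det = p.1 := by
    intro p
    conv_rhs => rw [← one_mul p.1, ← cos_sq_add_sin_sq p.2]
    simp only [B, neg_mul, LinearMap.det_toContinuousLinearMap, LinearMap.det_toLin,
      Matrix.det_fin_two_of, sub_neg_eq_add]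
    ring
  symm
  calc
    ∫⁻ p, g p = ∫⁻ p in polarCoord.source, g p := by
      rw [← setLIntegral_univ]
      exact setLIntegral_congr polarCoord_source_ae_eq_univ.symm
    _ = ∫⁻ p in polarCoord.symm '' polarCoord.target, g p := by
      rw [polarCoord.symm_image_target_eq_source]
    _ = ∫⁻ p in polarCoord.target, ENNReal.ofReal |(B p).det| * g (polarCoord.symm p) := by
      exact lintegral_image_eq_lintegral_abs_det_fderiv_mul volume
        polarCoord.open_target.measurableSet A polarCoord.symm.injOn g
    _ = ∫⁻ p in polarCoord.target, ENNReal.ofReal p.1 * g (polarCoord.symm p) := by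
      refine setLIntegral_congr_fun polarCoord.open_target.measurableSet
        (fun p hp => ?_)
      rw [B_det, abs_of_pos hp.1]

theorem Complex.lintegral_comp_polarCoord_symm' (g : ℂ → ℝ≥0∞) :
    ∫⁻ p in polarCoord.target, ENNReal.ofReal p.1 * g (Complex.polarCoord.symm p) = ∫⁻ z, g z := by
  calc ∫⁻ p in polarCoord.target, ENNReal.ofReal p.1 * g (Complex.polarCoord.symm p)
      = ∫⁻ p in polarCoord.target,
          ENNReal.ofReal p.1 * (g ∘ Complex.measurableEquivRealProd.symm) (polarCoord.symm p) :=
        rfl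
    _ = ∫⁻ p, (g ∘ Complex.measurableEquivRealProd.symm) p := _root_.lintegral_comp_polarCoord_symm' _
    _ = ∫⁻ z, g z := (Complex.volume_preserving_equiv_real_prod.symm).lintegral_comp_emb
        Complex.measurableEquivRealProd.symm.measurableEmbedding g


open Metric intervalIntegral in
theorem circle_meanvalue {r s : ℝ} (hs : 0 < s) (hsr : s < r) {f : ℂ → ℂ}
    (hf : DifferentiableOn ℂ f (ball (0:ℂ) r)) :
    f 0 = (2 * π)⁻¹ • ∫ θ in Ioo (-π) π, f (circleMap 0 s θ) := by
  have hball : closedBall (0:ℂ) s ⊆ ball 0 r := closedBall_subset_ball hsr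
  have h1 : (∮ z in C(0, s), (z - 0)⁻¹ • f z) = (2 * π * Complex.I) • f 0 :=
    Complex.circleIntegral_sub_center_inv_smul_of_differentiable_on_off_countable hs countable_empty
      (hf.continuousOn.mono hball)
      (fun z hz => hf.differentiableAt
        (isOpen_ball.mem_nhds (ball_subset_ball hsr.le hz.1)))
  have h2 : (∮ z in C(0, s), (z - 0)⁻¹ • f z)
      = Complex.I * ∫ θ in (0:ℝ)..(2*π), f (circleMap 0 s θ) := by
    rw [← intervalIntegral.integral_const_mul]
    simp only [circleIntegral, deriv_circleMap, sub_zero, smul_eq_mul]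
    refine intervalIntegral.integral_congr fun θ _ => ?_
    have hne : circleMap 0 s θ ≠ 0 := circleMap_ne_center hs.ne'
    field_simp
  have h3 : ((2 * π : ℝ) : ℂ) * f 0 = ∫ θ in (0:ℝ)..(2*π), f (circleMap 0 s θ) := by
    apply mul_left_cancel₀ Complex.I_ne_zero
    rw [← h2, h1, smul_eq_mul]
    push_cast
    ring
  have hper : Function.Periodic (fun θ => f (circleMap 0 s θ)) (2 * π) :=
    (periodic_circleMap 0 s).comp f
  have h4 : (∫ θ in (0:ℝ)..(2*π), f (circleMap 0 s θ))
      = ∫ θ in Ioo (-π) π, f (circleMap 0 s θ) := by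
    have := hper.intervalIntegral_add_eq (-π) 0
    rw [zero_add] at this
    have hpi : -π + 2*π = π := by ring
    rw [← this, hpi, intervalIntegral.integral_of_le (by linarith [pi_pos] : -π ≤ π),
      integral_Ioc_eq_integral_Ioo]
  rw [← h4, ← h3]
  have h2pi : (2 * π : ℝ) ≠ 0 := by positivity
  rw [Complex.real_smul]
  push_cast
  rw [← mul_assoc]
  rw [inv_mul_cancel₀ (mul_ne_zero two_ne_zero (Complex.ofReal_ne_zero.2 Real.pi_ne_zero)), one_mul]

open Metric in
theorem circle_sq_bound {r s : ℝ} (hs : 0 < s) (hsr : s < r) {f : ℂ → ℂ}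
    (hf : DifferentiableOn ℂ f (ball (0:ℂ) r)) :
    ENNReal.ofReal (‖f 0‖ ^ 2) * ENNReal.ofReal (2 * π) ≤
      ∫⁻ θ in Ioo (-π) π, ENNReal.ofReal (‖f (circleMap 0 s θ)‖ ^ 2) := by
  have hmem : ∀ θ : ℝ, circleMap 0 s θ ∈ ball (0:ℂ) r := fun θ => by
    simp only [mem_ball, dist_zero_right, norm_circleMap_zero]
    rw [abs_of_pos hs]; exact hsr
  have hcf : Continuous fun θ => f (circleMap 0 s θ) :=
    hf.continuousOn.comp_continuous (continuous_circleMap 0 s) hmem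
  set g : ℝ → ℝ := fun θ => ‖f (circleMap 0 s θ)‖ with hg
  have hgc : Continuous g := continuous_norm.comp hcf
  have hgnn : ∀ θ, 0 ≤ g θ := fun θ => norm_nonneg _
  -- real mean value bound
  have step1 : ‖f 0‖ * (2 * π) ≤ ∫ θ in Ioo (-π) π, g θ := by
    have := circle_meanvalue hs hsr hf
    have hnorm : ‖f 0‖ ≤ (2 * π)⁻¹ * ∫ θ in Ioo (-π) π, g θ := by
      calc ‖f 0‖ = ‖f 0‖ := rfl
        _ = ‖(2 * π)⁻¹ • ∫ θ in Ioo (-π) π, f (circleMap 0 s θ)‖ := by rw [← this]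
        _ = (2 * π)⁻¹ * ‖∫ θ in Ioo (-π) π, f (circleMap 0 s θ)‖ := by
            rw [norm_smul, Real.norm_eq_abs, abs_of_pos (by positivity : (0:ℝ) < (2*π)⁻¹)]
        _ ≤ (2 * π)⁻¹ * ∫ θ in Ioo (-π) π, g θ := by
            gcongr
            exact norm_integral_le_integral_norm _
    calc ‖f 0‖ * (2 * π) ≤ ((2 * π)⁻¹ * ∫ θ in Ioo (-π) π, g θ) * (2 * π) :=
          mul_le_mul_of_nonneg_right hnorm (by positivity)
      _ = ∫ θ in Ioo (-π) π, g θ := by field_simp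
  have hgint : IntegrableOn g (Ioo (-π) π) := (hgc.integrableOn_Icc).mono_set Ioo_subset_Icc_self
  -- A = lintegral of ofReal g
  set A : ℝ≥0∞ := ∫⁻ θ in Ioo (-π) π, ENNReal.ofReal (g θ) with hA
  set B : ℝ≥0∞ := ∫⁻ θ in Ioo (-π) π, ENNReal.ofReal (‖f (circleMap 0 s θ)‖ ^ 2)
    with hB
  have hAeq : A = ENNReal.ofReal (∫ θ in Ioo (-π) π, g θ) :=
    (ofReal_integral_eq_lintegral_ofReal hgint
      (Filter.Eventually.of_forall hgnn)).symm
  have step2 : ENNReal.ofReal (‖f 0‖ * (2 * π)) ≤ A := by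
    rw [hAeq]; exact ENNReal.ofReal_le_ofReal step1
  -- Hölder with p = q = 2
  have hconj : Real.HolderConjugate 2 2 := by
    rw [Real.holderConjugate_iff]; norm_num
  have hFm : AEMeasurable (fun θ => ENNReal.ofReal (g θ))
      (volume.restrict (Ioo (-π) π)) :=
    (ENNReal.measurable_ofReal.comp hgc.measurable).aemeasurable
  have holder := ENNReal.lintegral_mul_le_Lp_mul_Lq (volume.restrict (Ioo (-π) π)) hconj hFm
    (aemeasurable_const (b := (1:ℝ≥0∞)))
  simp only [Pi.mul_apply, mul_one, ENNReal.one_rpow, lintegral_const,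
    Measure.restrict_apply MeasurableSet.univ, univ_inter] at holder
  have hvol : volume (Ioo (-π) π) = ENNReal.ofReal (2 * π) := by
    rw [Real.volume_Ioo]; congr 1; ring
  have hF2 : (∫⁻ θ in Ioo (-π) π, ENNReal.ofReal (g θ) ^ (2:ℝ)) = B := by
    refine lintegral_congr fun θ => ?_
    rw [show ((2:ℝ)) = ((2:ℕ):ℝ) by norm_num, ENNReal.rpow_natCast,
      ← ENNReal.ofReal_pow (hgnn θ)]
  rw [hF2, hvol, one_mul] at holder
  -- holder : A ≤ B ^ (1/2) * ofReal (2π) ^ (1/2)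
  have hsq : A ^ (2:ℕ) ≤ B * ENNReal.ofReal (2 * π) := by
    calc A ^ (2:ℕ) ≤ (B ^ ((1:ℝ)/2) * ENNReal.ofReal (2 * π) ^ ((1:ℝ)/2)) ^ (2:ℕ) := pow_le_pow_left' holder 2
      _ = B * ENNReal.ofReal (2 * π) := by
          rw [mul_pow, ← ENNReal.rpow_natCast (B ^ ((1:ℝ)/2)) 2,
            ← ENNReal.rpow_natCast (ENNReal.ofReal (2*π) ^ ((1:ℝ)/2)) 2,
            ← ENNReal.rpow_mul, ← ENNReal.rpow_mul]
          norm_num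
  have hLHS : ENNReal.ofReal (2 * π) * (ENNReal.ofReal (‖f 0‖ ^ 2)
      * ENNReal.ofReal (2 * π)) ≤ ENNReal.ofReal (2 * π) * B := by
    calc ENNReal.ofReal (2 * π) * (ENNReal.ofReal (‖f 0‖ ^ 2)
          * ENNReal.ofReal (2 * π))
        = ENNReal.ofReal ((2 * π) * (‖f 0‖ ^ 2 * (2 * π))) := by
          rw [show ENNReal.ofReal ((2*π) * (‖f 0‖^2 * (2*π)))
              = ENNReal.ofReal (2*π) * ENNReal.ofReal (‖f 0‖^2 * (2*π)) from
              ENNReal.ofReal_mul (by positivity),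
            show ENNReal.ofReal (‖f 0‖^2 * (2*π))
              = ENNReal.ofReal (‖f 0‖^2) * ENNReal.ofReal (2*π) from
              ENNReal.ofReal_mul (by positivity)]
      _ = ENNReal.ofReal ((‖f 0‖ * (2 * π)) ^ 2) := by congr 1; ring
      _ = ENNReal.ofReal (‖f 0‖ * (2 * π)) ^ (2:ℕ) :=
          ENNReal.ofReal_pow (by positivity) 2
      _ ≤ A ^ (2:ℕ) := by gcongr
      _ ≤ B * ENNReal.ofReal (2 * π) := hsq
      _ = ENNReal.ofReal (2 * π) * B := mul_comm _ _
  have h2pi0 : ENNReal.ofReal (2 * π) ≠ 0 := by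
    simp [ENNReal.ofReal_eq_zero]
    positivity
  exact (ENNReal.mul_le_mul_iff_right h2pi0 ENNReal.ofReal_ne_top).1 hLHS

theorem polar_symm_eq_circleMap (p : ℝ × ℝ) :
    Complex.polarCoord.symm p = circleMap 0 p.1 p.2 := by
  rw [Complex.polarCoord_symm_apply, circleMap, Complex.exp_mul_I, zero_add,
    ← Complex.ofReal_cos, ← Complex.ofReal_sin]

open Metric in
theorem lintegral_ball_polar (r : ℝ) (g : ℂ → ℝ≥0∞) :
    ∫⁻ z in ball (0:ℂ) r, g z
      = ∫⁻ p in Ioo 0 r ×ˢ Ioo (-π) π, ENNReal.ofReal p.1 * g (circleMap 0 p.1 p.2) := by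
  have htarget : polarCoord.target = Ioi (0:ℝ) ×ˢ Ioo (-π) π := rfl
  have mball : MeasurableSet (ball (0:ℂ) r) := measurableSet_ball
  have mbox : MeasurableSet (Ioo (0:ℝ) r ×ˢ Ioo (-π) π) :=
    measurableSet_Ioo.prod measurableSet_Ioo
  rw [← lintegral_indicator mball,
    ← Complex.lintegral_comp_polarCoord_symm' ((ball (0:ℂ) r).indicator g),
    ← lintegral_indicator polarCoord.open_target.measurableSet,
    ← lintegral_indicator mbox]
  congr 1
  funext p
  by_cases hbox : p ∈ Ioo (0:ℝ) r ×ˢ Ioo (-π) π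
  · have htp : p ∈ polarCoord.target := by
      rw [htarget]
      exact ⟨mem_Ioi.2 hbox.1.1, hbox.2⟩
    have habs : ‖Complex.polarCoord.symm p‖ = p.1 := by
      rw [Complex.norm_polarCoord_symm, abs_of_pos hbox.1.1]
    have hmem : Complex.polarCoord.symm p ∈ ball (0:ℂ) r := by
      rw [mem_ball, dist_zero_right, habs]
      exact hbox.1.2
    rw [indicator_of_mem htp, indicator_of_mem hbox, indicator_of_mem hmem,
      polar_symm_eq_circleMap]
  · rw [indicator_of_notMem hbox]
    by_cases htp : p ∈ polarCoord.target
    · rw [indicator_of_mem htp]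
      have hp1 : 0 < p.1 := by rw [htarget] at htp; exact htp.1
      have hp1r : ¬ p.1 < r := by
        intro hlt
        exact hbox ⟨⟨hp1, hlt⟩, (htarget ▸ htp).2⟩
      have : Complex.polarCoord.symm p ∉ ball (0:ℂ) r := by
        rw [mem_ball, dist_zero_right, Complex.norm_polarCoord_symm,
          abs_of_pos hp1]
        exact hp1r
      rw [indicator_of_notMem this, mul_zero]
    · rw [indicator_of_notMem htp]

theorem tonelli_box {a b c d : ℝ} (F : ℝ × ℝ → ℝ≥0∞)
    (hF : AEMeasurable F (volume.restrict (Ioo a b ×ˢ Ioo c d))) :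
    ∫⁻ p in Ioo a b ×ˢ Ioo c d, F p = ∫⁻ s in Ioo a b, ∫⁻ θ in Ioo c d, F (s, θ) := by
  have hprod : (volume : Measure (ℝ × ℝ)).restrict (Ioo a b ×ˢ Ioo c d)
      = (volume.restrict (Ioo a b)).prod (volume.restrict (Ioo c d)) := by
    rw [Measure.volume_eq_prod, Measure.prod_restrict]
  rw [hprod] at hF ⊢
  exact lintegral_prod F hF

open Metric in
theorem one_var {r : ℝ} (hr : 0 < r) {f : ℂ → ℂ} (hf : DifferentiableOn ℂ f (ball (0:ℂ) r))
    {w : ℝ → ℝ} (hw : Measurable w) :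
    ENNReal.ofReal (‖f 0‖ ^ 2) *
        ∫⁻ z in ball (0:ℂ) r, ENNReal.ofReal (w (‖z‖))
      ≤ ∫⁻ z in ball (0:ℂ) r, ENNReal.ofReal (‖f z‖ ^ 2 * w (‖z‖)) := by
  have mbox : MeasurableSet (Ioo (0:ℝ) r ×ˢ Ioo (-π) π) :=
    measurableSet_Ioo.prod measurableSet_Ioo
  have hcm : Continuous fun p : ℝ × ℝ => circleMap 0 p.1 p.2 := by
    simp only [circleMap]
    fun_prop
  have habsm : Measurable fun p : ℝ × ℝ => ‖circleMap 0 p.1 p.2‖ :=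
    (continuous_norm.comp hcm).measurable
  have hmaps : Set.MapsTo (fun p : ℝ × ℝ => circleMap 0 p.1 p.2)
      (Ioo (0:ℝ) r ×ˢ Ioo (-π) π) (ball (0:ℂ) r) := fun p hp => by
    rw [mem_ball, dist_zero_right, norm_circleMap_zero, abs_of_pos hp.1.1]
    exact hp.1.2
  have hfc : ContinuousOn (fun p : ℝ × ℝ => ‖f (circleMap 0 p.1 p.2)‖ ^ 2)
      (Ioo (0:ℝ) r ×ˢ Ioo (-π) π) :=
    ((continuous_norm.comp_continuousOn
      (hf.continuousOn.comp hcm.continuousOn hmaps)).pow 2)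
  have meas₁ : AEMeasurable
      (fun p : ℝ × ℝ => ENNReal.ofReal p.1
        * ENNReal.ofReal (w (‖circleMap 0 p.1 p.2‖)))
      (volume.restrict (Ioo (0:ℝ) r ×ˢ Ioo (-π) π)) :=
    ((measurable_fst.ennreal_ofReal).mul ((hw.comp habsm).ennreal_ofReal)).aemeasurable
  have meas₂ : AEMeasurable
      (fun p : ℝ × ℝ => ENNReal.ofReal p.1
        * ENNReal.ofReal (‖f (circleMap 0 p.1 p.2)‖ ^ 2
            * w (‖circleMap 0 p.1 p.2‖)))
      (volume.restrict (Ioo (0:ℝ) r ×ˢ Ioo (-π) π)) :=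
    (measurable_fst.ennreal_ofReal.aemeasurable).mul
      (ENNReal.measurable_ofReal.comp_aemeasurable
        ((hfc.aemeasurable mbox).mul ((hw.comp habsm).aemeasurable)))
  have hW : (∫⁻ z in ball (0:ℂ) r, ENNReal.ofReal (w (‖z‖)))
      = ∫⁻ s in Ioo (0:ℝ) r, (ENNReal.ofReal s * ENNReal.ofReal (w s)) * ENNReal.ofReal (2*π) := by
    rw [lintegral_ball_polar r (fun z => ENNReal.ofReal (w (‖z‖))), tonelli_box _ meas₁]
    refine setLIntegral_congr_fun measurableSet_Ioo
      (fun s hs => ?_)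
    have habs : ∀ θ : ℝ, ‖circleMap 0 s θ‖ = s := fun θ => by
      rw [norm_circleMap_zero, abs_of_pos hs.1]
    simp only [habs]
    rw [setLIntegral_const, Real.volume_Ioo, show π - -π = 2*π by ring]
  have hR : (∫⁻ z in ball (0:ℂ) r,
        ENNReal.ofReal (‖f z‖ ^ 2 * w (‖z‖)))
      = ∫⁻ s in Ioo (0:ℝ) r, (ENNReal.ofReal s * ENNReal.ofReal (w s))
          * ∫⁻ θ in Ioo (-π) π, ENNReal.ofReal (‖f (circleMap 0 s θ)‖ ^ 2) := by
    rw [lintegral_ball_polar r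
      (fun z => ENNReal.ofReal (‖f z‖ ^ 2 * w (‖z‖))), tonelli_box _ meas₂]
    refine setLIntegral_congr_fun measurableSet_Ioo
      (fun s hs => ?_)
    have habs : ∀ θ : ℝ, ‖circleMap 0 s θ‖ = s := fun θ => by
      rw [norm_circleMap_zero, abs_of_pos hs.1]
    simp only [habs]
    have hpt : ∀ θ : ℝ, ENNReal.ofReal s
        * ENNReal.ofReal (‖f (circleMap 0 s θ)‖ ^ 2 * w s)
        = (ENNReal.ofReal s * ENNReal.ofReal (w s))
          * ENNReal.ofReal (‖f (circleMap 0 s θ)‖ ^ 2) := fun θ => by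
      rw [ENNReal.ofReal_mul (by positivity : (0:ℝ) ≤ ‖f (circleMap 0 s θ)‖ ^ 2)]
      ring
    simp only [hpt]
    exact lintegral_const_mul' _ _ (ENNReal.mul_ne_top ENNReal.ofReal_ne_top ENNReal.ofReal_ne_top)
  rw [hW, hR, ← lintegral_const_mul' (ENNReal.ofReal (‖f 0‖ ^ 2)) _
    ENNReal.ofReal_ne_top]
  refine lintegral_mono_ae ((ae_restrict_mem measurableSet_Ioo).mono fun s hs => ?_)
  calc ENNReal.ofReal (‖f 0‖ ^ 2)
        * ((ENNReal.ofReal s * ENNReal.ofReal (w s)) * ENNReal.ofReal (2*π))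
      = (ENNReal.ofReal s * ENNReal.ofReal (w s))
          * (ENNReal.ofReal (‖f 0‖ ^ 2) * ENNReal.ofReal (2*π)) := by ring
    _ ≤ (ENNReal.ofReal s * ENNReal.ofReal (w s))
          * ∫⁻ θ in Ioo (-π) π, ENNReal.ofReal (‖f (circleMap 0 s θ)‖ ^ 2) :=
      mul_le_mul_right (circle_sq_bound hs.1 hs.2 hf) _

open Metric in
theorem poly_submean : ∀ (m : ℕ) (r : ℝ), 0 < r → ∀ (lam : Fin m → ℝ), (∀ j, 0 < lam j) →
    ∀ f : (Fin m → ℂ) → ℂ, DifferentiableOn ℂ f {ζ : Fin m → ℂ | ∀ j, ‖ζ j‖ < r} →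
    ENNReal.ofReal (‖f 0‖ ^ 2) *
      (∫⁻ ζ in {ζ : Fin m → ℂ | ∀ j, ‖ζ j‖ < r},
        ENNReal.ofReal (Real.exp (-2 * ∑ j, lam j * ‖ζ j‖ ^ 2)))
    ≤ ∫⁻ ζ in {ζ : Fin m → ℂ | ∀ j, ‖ζ j‖ < r},
        ENNReal.ofReal (‖f ζ‖ ^ 2
          * Real.exp (-2 * ∑ j, lam j * ‖ζ j‖ ^ 2)) := by
  intro m
  induction m with
  | zero =>
    intro r hr lam hlam f hf
    have hD : {ζ : Fin 0 → ℂ | ∀ j, ‖ζ j‖ < r} = Set.univ :=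
      Set.eq_univ_iff_forall.2 fun ζ j => j.elim0
    have key : ∀ g : (Fin 0 → ℂ) → ℝ≥0∞, ∫⁻ ζ, g ζ = g 0 := fun g => by
      have h0 : g default = g 0 := congrArg g (Subsingleton.elim _ _)
      have h1 : (volume : Measure (Fin 0 → ℂ)) Set.univ = 1 := by
        rw [MeasureTheory.volume_pi, Measure.pi_univ]
        simp
      rw [lintegral_unique, h1, mul_one]
      exact congrArg g (Subsingleton.elim _ 0)
    rw [hD, Measure.restrict_univ, key, key]
    exact le_of_eq (ENNReal.ofReal_mul (by positivity)).symm
  | succ m IH =>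
    intro r hr lam hlam f hf
    set D : Set (Fin (m+1) → ℂ) := {ζ | ∀ j, ‖ζ j‖ < r} with hDdef
    set D' : Set (Fin m → ℂ) := {ζ | ∀ j, ‖ζ j‖ < r} with hD'def
    have hDopen : IsOpen D := by
      have : D = Set.pi Set.univ (fun _ : Fin (m+1) => ball (0:ℂ) r) := by
        ext ζ
        simp [Set.mem_pi, mem_ball, dist_zero_right, hDdef]
      rw [this]
      exact isOpen_set_pi Set.finite_univ fun i _ => isOpen_ball
    have hD'meas : MeasurableSet D' := by
      have : D' = Set.pi Set.univ (fun _ : Fin m => ball (0:ℂ) r) := by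
        ext ζ
        simp [Set.mem_pi, mem_ball, dist_zero_right, hD'def]
      rw [this]
      exact MeasurableSet.univ_pi fun i => measurableSet_ball
    have hboxmeas : MeasurableSet (ball (0:ℂ) r ×ˢ D') := measurableSet_ball.prod hD'meas
    set e := MeasurableEquiv.piFinSuccAbove (fun _ : Fin (m+1) => ℂ) 0 with he
    have hesymm : ∀ p : ℂ × (Fin m → ℂ), e.symm p = Fin.cons p.1 p.2 := fun p => by
      have h1 : e.symm p = Fin.insertNth 0 p.1 p.2 := rfl
      rw [h1, Fin.insertNth_zero']
    have hcons_mem : ∀ z : ℂ, ∀ ζ' : Fin m → ℂ, z ∈ ball (0:ℂ) r → ζ' ∈ D' →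
        (Fin.cons z ζ' : Fin (m+1) → ℂ) ∈ D := by
      intro z ζ' hz hζ' j
      refine Fin.cases ?_ ?_ j
      · rw [Fin.cons_zero]
        rwa [mem_ball, dist_zero_right] at hz
      · intro i
        rw [Fin.cons_succ]
        exact hζ' i
    have hpre : e ⁻¹' (ball (0:ℂ) r ×ˢ D') = D := by
      ext ζ
      constructor
      · intro hζ
        have h1 : ζ 0 ∈ ball (0:ℂ) r := hζ.1
        have h2 : ∀ j : Fin m, ‖ζ j.succ‖ < r := fun j => hζ.2 j
        intro j
        refine Fin.cases ?_ h2 j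
        rwa [mem_ball, dist_zero_right] at h1
      · intro hζ
        refine ⟨?_, fun j => hζ j.succ⟩
        rw [mem_ball, dist_zero_right]
        exact hζ 0
    -- the Fubini step
    have fub : ∀ G : (Fin (m+1) → ℂ) → ℝ≥0∞,
        AEMeasurable (fun p : ℂ × (Fin m → ℂ) => G (Fin.cons p.1 p.2))
          (volume.restrict (ball (0:ℂ) r ×ˢ D')) →
        ∫⁻ ζ in D, G ζ = ∫⁻ ζ' in D', ∫⁻ z in ball (0:ℂ) r, G (Fin.cons z ζ') := by
      intro G hG
      have mp : MeasurePreserving e (volume.restrict D)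
          (volume.restrict (ball (0:ℂ) r ×ˢ D')) := by
        have := (volume_preserving_piFinSuccAbove (fun _ : Fin (m+1) => ℂ) 0).restrict_preimage
          hboxmeas
        rwa [hpre] at this
      have hge : ∀ ζ : Fin (m+1) → ℂ, G (Fin.cons (e ζ).1 (e ζ).2) = G ζ := by
        intro ζ
        congr 1
        funext j
        refine Fin.cases ?_ ?_ j
        · rw [Fin.cons_zero]; rfl
        · intro i; rw [Fin.cons_succ]; rfl
      calc ∫⁻ ζ in D, G ζ
          = ∫⁻ ζ in D, (fun p : ℂ × (Fin m → ℂ) => G (Fin.cons p.1 p.2)) (e ζ) := by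
            refine lintegral_congr fun ζ => ?_
            exact (hge ζ).symm
        _ = ∫⁻ p in ball (0:ℂ) r ×ˢ D', G (Fin.cons p.1 p.2) :=
            mp.lintegral_comp_emb e.measurableEmbedding
              (fun p : ℂ × (Fin m → ℂ) => G (Fin.cons p.1 p.2))
        _ = ∫⁻ ζ' in D', ∫⁻ z in ball (0:ℂ) r, G (Fin.cons z ζ') := by
            rw [Measure.volume_eq_prod, ← Measure.prod_restrict]
            refine lintegral_prod_symm _ ?_
            rwa [Measure.prod_restrict, ← Measure.volume_eq_prod]
    -- continuity facts
    have hcons_cont : Continuous fun p : ℂ × (Fin m → ℂ) => (Fin.cons p.1 p.2 : Fin (m+1) → ℂ) := by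
      refine continuous_pi fun i => ?_
      refine Fin.cases ?_ ?_ i
      · simp only [Fin.cons_zero]; exact continuous_fst
      · intro j
        simp only [Fin.cons_succ]
        exact (continuous_apply j).comp continuous_snd
    have hsumc : ∀ (k : ℕ) (c : Fin k → ℝ), Continuous fun ζ : Fin k → ℂ =>
        Real.exp (-2 * ∑ j, c j * ‖ζ j‖ ^ 2) := by
      intro k c
      exact Real.continuous_exp.comp (continuous_const.mul (continuous_finset_sum _ fun j _ =>
        continuous_const.mul ((continuous_norm.comp (continuous_apply j)).pow 2)))
    -- sum splitting
    have hsum : ∀ (z : ℂ) (ζ' : Fin m → ℂ),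
        (∑ j, lam j * ‖(Fin.cons z ζ' : Fin (m+1) → ℂ) j‖ ^ 2)
        = lam 0 * ‖z‖ ^ 2 + ∑ j, lam j.succ * ‖ζ' j‖ ^ 2 := by
      intro z ζ'
      rw [Fin.sum_univ_succ]
      simp only [Fin.cons_zero, Fin.cons_succ]
    set w0 : ℝ → ℝ := fun t => Real.exp (-2 * (lam 0 * t ^ 2)) with hw0
    have hw0meas : Measurable w0 := by fun_prop
    set C1 : ℝ≥0∞ := ∫⁻ z in ball (0:ℂ) r, ENNReal.ofReal (w0 (‖z‖)) with hC1
    have hC1top : C1 ≠ ⊤ := by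
      have hle : C1 ≤ volume (ball (0:ℂ) r) := by
        rw [hC1]
        calc ∫⁻ z in ball (0:ℂ) r, ENNReal.ofReal (w0 (‖z‖))
            ≤ ∫⁻ _ in ball (0:ℂ) r, 1 := by
              refine lintegral_mono fun z => ?_
              refine ENNReal.ofReal_le_one.2 ?_
              rw [hw0, Real.exp_le_one_iff]
              nlinarith [(hlam 0).le, sq_nonneg (‖z‖)]
          _ = volume (ball (0:ℂ) r) := by rw [setLIntegral_one]
      exact (lt_of_le_of_lt hle measure_ball_lt_top).ne
    -- weight factorization: exp(-2 total) = w0 |z| * exp(-2 Σ')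
    have hwfac : ∀ (z : ℂ) (ζ' : Fin m → ℂ),
        Real.exp (-2 * ∑ j, lam j * ‖(Fin.cons z ζ' : Fin (m+1) → ℂ) j‖ ^ 2)
        = w0 (‖z‖) * Real.exp (-2 * ∑ j, lam j.succ * ‖ζ' j‖ ^ 2) := by
      intro z ζ'
      rw [hsum, hw0]
      rw [← Real.exp_add]
      congr 1
      ring
    -- weight equality
    have hWeq : (∫⁻ ζ in D, ENNReal.ofReal (Real.exp (-2 * ∑ j, lam j * ‖ζ j‖ ^ 2)))
        = C1 * ∫⁻ ζ' in D',
            ENNReal.ofReal (Real.exp (-2 * ∑ j, lam j.succ * ‖ζ' j‖ ^ 2)) := by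
      rw [fub (fun ζ => ENNReal.ofReal (Real.exp (-2 * ∑ j, lam j * ‖ζ j‖ ^ 2)))
        (((hsumc (m+1) lam).comp hcons_cont).measurable.ennreal_ofReal.aemeasurable)]
      rw [← lintegral_const_mul' C1 _ hC1top]
      refine lintegral_congr fun ζ' => ?_
      calc ∫⁻ z in ball (0:ℂ) r,
            ENNReal.ofReal (Real.exp (-2 * ∑ j, lam j
              * ‖(Fin.cons z ζ' : Fin (m+1) → ℂ) j‖ ^ 2))
          = ∫⁻ z in ball (0:ℂ) r, ENNReal.ofReal (w0 (‖z‖))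
              * ENNReal.ofReal (Real.exp (-2 * ∑ j, lam j.succ * ‖ζ' j‖ ^ 2)) := by
            refine lintegral_congr fun z => ?_
            rw [hwfac, ENNReal.ofReal_mul (by positivity)]
        _ = C1 * ENNReal.ofReal (Real.exp (-2 * ∑ j, lam j.succ * ‖ζ' j‖ ^ 2)) := by
            rw [lintegral_mul_const' _ _ ENNReal.ofReal_ne_top, hC1]
    -- differentiability of slices
    have hslice : ∀ ζ' : Fin m → ℂ, ζ' ∈ D' →
        DifferentiableOn ℂ (fun z : ℂ => f (Fin.cons z ζ')) (ball (0:ℂ) r) := by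
      intro ζ' hζ'
      have hd : Differentiable ℂ fun z : ℂ => (Fin.cons z ζ' : Fin (m+1) → ℂ) := by
        refine differentiable_pi.2 fun i => ?_
        refine Fin.cases ?_ ?_ i
        · simp only [Fin.cons_zero]; exact differentiable_id
        · intro j; simp only [Fin.cons_succ]; exact differentiable_const _
      exact hf.comp hd.differentiableOn fun z hz => hcons_mem z ζ' hz hζ'
    set g : (Fin m → ℂ) → ℂ := fun ζ' => f (Fin.cons 0 ζ') with hg
    have hgdiff : DifferentiableOn ℂ g D' := by
      have hd : Differentiable ℂ fun ζ' : Fin m → ℂ => (Fin.cons 0 ζ' : Fin (m+1) → ℂ) := by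
        refine differentiable_pi.2 fun i => ?_
        refine Fin.cases ?_ ?_ i
        · simp only [Fin.cons_zero]; exact differentiable_const _
        · intro j; simp only [Fin.cons_succ]
          exact differentiable_pi.1 differentiable_id j
      refine hf.comp hd.differentiableOn fun ζ' hζ' => ?_
      exact hcons_mem 0 ζ' (by rwa [mem_ball, dist_zero_right, norm_zero]) hζ'
    have hg0 : g 0 = f 0 := by
      have hc0 : (Fin.cons (0:ℂ) (0 : Fin m → ℂ) : Fin (m+1) → ℂ) = 0 := by
        funext j
        refine Fin.cases ?_ ?_ j
        · rw [Fin.cons_zero]; rfl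
        · intro i; rw [Fin.cons_succ]; rfl
      show f (Fin.cons 0 0) = f 0
      rw [hc0]
    -- main chain
    have hmeasG : AEMeasurable (fun p : ℂ × (Fin m → ℂ) =>
        ENNReal.ofReal (‖f (Fin.cons p.1 p.2)‖ ^ 2
          * Real.exp (-2 * ∑ j, lam j
              * ‖(Fin.cons p.1 p.2 : Fin (m+1) → ℂ) j‖ ^ 2)))
        (volume.restrict (ball (0:ℂ) r ×ˢ D')) := by
      have hcont : ContinuousOn (fun p : ℂ × (Fin m → ℂ) =>
          ‖f (Fin.cons p.1 p.2)‖ ^ 2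
            * Real.exp (-2 * ∑ j, lam j
                * ‖(Fin.cons p.1 p.2 : Fin (m+1) → ℂ) j‖ ^ 2))
          (ball (0:ℂ) r ×ˢ D') := by
        have h1 : ContinuousOn (fun p : ℂ × (Fin m → ℂ) => f (Fin.cons p.1 p.2))
            (ball (0:ℂ) r ×ˢ D') :=
          hf.continuousOn.comp hcons_cont.continuousOn
            (fun p hp => hcons_mem p.1 p.2 hp.1 hp.2)
        exact ((continuous_norm.comp_continuousOn h1).pow 2).mul
          (((hsumc (m+1) lam).comp hcons_cont).continuousOn)
      exact ENNReal.measurable_ofReal.comp_aemeasurable (hcont.aemeasurable hboxmeas)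
    calc ENNReal.ofReal (‖f 0‖ ^ 2) *
          ∫⁻ ζ in D, ENNReal.ofReal (Real.exp (-2 * ∑ j, lam j * ‖ζ j‖ ^ 2))
        = C1 * (ENNReal.ofReal (‖g 0‖ ^ 2) * ∫⁻ ζ' in D',
            ENNReal.ofReal (Real.exp (-2 * ∑ j, lam j.succ * ‖ζ' j‖ ^ 2))) := by
          rw [hWeq, hg0]; ring
      _ ≤ C1 * ∫⁻ ζ' in D', ENNReal.ofReal (‖g ζ'‖ ^ 2
            * Real.exp (-2 * ∑ j, lam j.succ * ‖ζ' j‖ ^ 2)) := by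
          exact mul_le_mul_right (IH r hr (fun j => lam j.succ) (fun j => hlam j.succ) g hgdiff) _
      _ = ∫⁻ ζ' in D', C1 * ENNReal.ofReal (‖g ζ'‖ ^ 2
            * Real.exp (-2 * ∑ j, lam j.succ * ‖ζ' j‖ ^ 2)) :=
          (lintegral_const_mul' _ _ hC1top).symm
      _ ≤ ∫⁻ ζ' in D', ∫⁻ z in ball (0:ℂ) r,
            ENNReal.ofReal (‖f (Fin.cons z ζ')‖ ^ 2
              * Real.exp (-2 * ∑ j, lam j
                  * ‖(Fin.cons z ζ' : Fin (m+1) → ℂ) j‖ ^ 2)) := by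
          refine lintegral_mono_ae ((ae_restrict_mem hD'meas).mono fun ζ' hζ' => ?_)
          have hov := one_var hr (hslice ζ' hζ') hw0meas
          calc C1 * ENNReal.ofReal (‖g ζ'‖ ^ 2
                * Real.exp (-2 * ∑ j, lam j.succ * ‖ζ' j‖ ^ 2))
              = (ENNReal.ofReal (‖f (Fin.cons (0:ℂ) ζ')‖ ^ 2) * C1)
                  * ENNReal.ofReal (Real.exp (-2 * ∑ j, lam j.succ
                      * ‖ζ' j‖ ^ 2)) := by
                rw [ENNReal.ofReal_mul (by positivity), hg]
                ring
            _ ≤ (∫⁻ z in ball (0:ℂ) r, ENNReal.ofReal (‖f (Fin.cons z ζ')‖ ^ 2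
                  * w0 (‖z‖)))
                  * ENNReal.ofReal (Real.exp (-2 * ∑ j, lam j.succ
                      * ‖ζ' j‖ ^ 2)) :=
                mul_le_mul_left hov _
            _ = ∫⁻ z in ball (0:ℂ) r, ENNReal.ofReal (‖f (Fin.cons z ζ')‖ ^ 2
                  * Real.exp (-2 * ∑ j, lam j
                      * ‖(Fin.cons z ζ' : Fin (m+1) → ℂ) j‖ ^ 2)) := by
                rw [← lintegral_mul_const' _ _ ENNReal.ofReal_ne_top]
                refine lintegral_congr fun z => ?_
                rw [hwfac z ζ',
                  show ‖f (Fin.cons z ζ')‖ ^ 2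
                      * (w0 (‖z‖)
                        * Real.exp (-2 * ∑ j, lam j.succ * ‖ζ' j‖ ^ 2))
                    = (‖f (Fin.cons z ζ')‖ ^ 2 * w0 (‖z‖))
                      * Real.exp (-2 * ∑ j, lam j.succ * ‖ζ' j‖ ^ 2) from by ring,
                  ENNReal.ofReal_mul (by positivity),
                  ENNReal.ofReal_mul (by positivity),
                  ENNReal.ofReal_mul (by positivity)]
      _ = ∫⁻ ζ in D, ENNReal.ofReal (‖f ζ‖ ^ 2
            * Real.exp (-2 * ∑ j, lam j * ‖ζ j‖ ^ 2)) :=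
          (fub (fun ζ => ENNReal.ofReal (‖f ζ‖ ^ 2
            * Real.exp (-2 * ∑ j, lam j * ‖ζ j‖ ^ 2))) hmeasG).symm

end AuxLemmas

/-- **Sub-mean value inequality with a perturbed Gaussian weight on a polydisc.**
Let `r > 0`, `M ≥ 0`, `λ_1, …, λ_m > 0`, and let `φ̃` be measurable on the polydisc
`Δ^m(0,r)` with `|φ̃(ζ) − Σ λ_j |ζ_j|²| ≤ M |ζ|³` there. Then for every `h` holomorphic on
`Δ^m(0,r)`:
`|h(0)|² ∫_{Δ^m(0,r)} e^{-2Σλ_j|ζ_j|²} ≤ exp(2 M m^{3/2} r³) ∫_{Δ^m(0,r)} |h|² e^{-2φ̃}`,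
the right-hand side being allowed to equal `+∞`. -/
theorem submeanvalue_polydisc_perturbed
    (m : ℕ) (r M : ℝ) (hr : 0 < r) (hM : 0 ≤ M)
    (lam : Fin m → ℝ) (hlam : ∀ j, 0 < lam j)
    (φt : (Fin m → ℂ) → ℝ)
    (hφtmeas : AEMeasurable φt
      (volume.restrict {ζ : Fin m → ℂ | ∀ j, ‖ζ j‖ < r}))
    (hφtapprox : ∀ ζ : Fin m → ℂ, (∀ j, ‖ζ j‖ < r) →
      |φt ζ - ∑ j, lam j * ‖ζ j‖ ^ 2| ≤ M * euclNorm ζ ^ 3)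
    (h : (Fin m → ℂ) → ℂ)
    (hh : DifferentiableOn ℂ h {ζ : Fin m → ℂ | ∀ j, ‖ζ j‖ < r}) :
    ENNReal.ofReal (‖h 0‖ ^ 2) *
        (∫⁻ ζ in {ζ : Fin m → ℂ | ∀ j, ‖ζ j‖ < r},
          ENNReal.ofReal (Real.exp (-2 * ∑ j, lam j * ‖ζ j‖ ^ 2))) ≤
      ENNReal.ofReal (Real.exp (2 * M * (m : ℝ) ^ (3 / 2 : ℝ) * r ^ 3)) *
        ∫⁻ ζ in {ζ : Fin m → ℂ | ∀ j, ‖ζ j‖ < r},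
          ENNReal.ofReal (‖h ζ‖ ^ 2 * Real.exp (-2 * φt ζ)) := by
  have hDmeas : MeasurableSet {ζ : Fin m → ℂ | ∀ j, ‖ζ j‖ < r} := by
    have hpi : {ζ : Fin m → ℂ | ∀ j, ‖ζ j‖ < r}
        = Set.pi Set.univ (fun _ : Fin m => Metric.ball (0:ℂ) r) := by
      ext ζ
      simp [Set.mem_pi, Metric.mem_ball, dist_zero_right]
    rw [hpi]
    exact MeasurableSet.univ_pi fun i => measurableSet_ball
  refine (poly_submean m r hr lam hlam h hh).trans ?_
  have hpt : ∀ ζ : Fin m → ℂ, ζ ∈ {ζ : Fin m → ℂ | ∀ j, ‖ζ j‖ < r} →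
      ENNReal.ofReal (‖h ζ‖ ^ 2
          * Real.exp (-2 * ∑ j, lam j * ‖ζ j‖ ^ 2))
        ≤ ENNReal.ofReal (Real.exp (2 * M * (m : ℝ) ^ (3 / 2 : ℝ) * r ^ 3))
          * ENNReal.ofReal (‖h ζ‖ ^ 2 * Real.exp (-2 * φt ζ)) := by
    intro ζ hζ
    rw [← ENNReal.ofReal_mul (by positivity)]
    refine ENNReal.ofReal_le_ofReal ?_
    have hEN : euclNorm ζ ≤ Real.sqrt m * r := by
      rw [euclNorm]
      calc Real.sqrt (∑ j, ‖ζ j‖ ^ 2)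
          ≤ Real.sqrt (∑ _j : Fin m, r ^ 2) := Real.sqrt_le_sqrt
            (Finset.sum_le_sum fun j _ => by nlinarith [norm_nonneg (ζ j), hζ j])
        _ = Real.sqrt ((m : ℝ) * r ^ 2) := by
            rw [Finset.sum_const, Finset.card_univ, Fintype.card_fin, nsmul_eq_mul]
        _ = Real.sqrt m * r := by
            rw [Real.sqrt_mul (by positivity), Real.sqrt_sq hr.le]
    have hcube : M * euclNorm ζ ^ 3 ≤ M * ((m : ℝ) ^ (3 / 2 : ℝ) * r ^ 3) := by
      have h0 : 0 ≤ euclNorm ζ := Real.sqrt_nonneg _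
      have h1 : euclNorm ζ ^ 3 ≤ (Real.sqrt m * r) ^ 3 := pow_le_pow_left₀ h0 hEN 3
      have h2 : (Real.sqrt m * r) ^ 3 = (m : ℝ) ^ (3 / 2 : ℝ) * r ^ 3 := by
        rw [mul_pow]
        congr 1
        rw [show Real.sqrt (m : ℝ) = (m : ℝ) ^ ((1:ℝ)/2) from Real.sqrt_eq_rpow _,
          ← Real.rpow_natCast ((m : ℝ) ^ ((1:ℝ)/2)) 3, ← Real.rpow_mul (Nat.cast_nonneg m)]
        norm_num
      exact mul_le_mul_of_nonneg_left (h1.trans_eq h2) hM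
    have h3 : |φt ζ - ∑ j, lam j * ‖ζ j‖ ^ 2|
        ≤ M * ((m : ℝ) ^ (3 / 2 : ℝ) * r ^ 3) := (hφtapprox ζ hζ).trans hcube
    obtain ⟨hl, hu⟩ := abs_le.1 h3
    have hineq : Real.exp (-2 * ∑ j, lam j * ‖ζ j‖ ^ 2)
        ≤ Real.exp (2 * M * (m : ℝ) ^ (3 / 2 : ℝ) * r ^ 3) * Real.exp (-2 * φt ζ) := by
      rw [← Real.exp_add]
      refine Real.exp_le_exp.2 ?_
      linarith
    calc ‖h ζ‖ ^ 2 * Real.exp (-2 * ∑ j, lam j * ‖ζ j‖ ^ 2)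
        ≤ ‖h ζ‖ ^ 2
            * (Real.exp (2 * M * (m : ℝ) ^ (3 / 2 : ℝ) * r ^ 3) * Real.exp (-2 * φt ζ)) :=
          mul_le_mul_of_nonneg_left hineq (by positivity)
      _ = Real.exp (2 * M * (m : ℝ) ^ (3 / 2 : ℝ) * r ^ 3)
            * (‖h ζ‖ ^ 2 * Real.exp (-2 * φt ζ)) := by ring
  calc (∫⁻ ζ in {ζ : Fin m → ℂ | ∀ j, ‖ζ j‖ < r},
        ENNReal.ofReal (‖h ζ‖ ^ 2
          * Real.exp (-2 * ∑ j, lam j * ‖ζ j‖ ^ 2)))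
      ≤ ∫⁻ ζ in {ζ : Fin m → ℂ | ∀ j, ‖ζ j‖ < r},
          ENNReal.ofReal (Real.exp (2 * M * (m : ℝ) ^ (3 / 2 : ℝ) * r ^ 3))
            * ENNReal.ofReal (‖h ζ‖ ^ 2 * Real.exp (-2 * φt ζ)) :=
        lintegral_mono_ae ((ae_restrict_mem hDmeas).mono hpt)
    _ = ENNReal.ofReal (Real.exp (2 * M * (m : ℝ) ^ (3 / 2 : ℝ) * r ^ 3)) *
        ∫⁻ ζ in {ζ : Fin m → ℂ | ∀ j, ‖ζ j‖ < r},
          ENNReal.ofReal (‖h ζ‖ ^ 2 * Real.exp (-2 * φt ζ)) :=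
      lintegral_const_mul' _ _ ENNReal.ofReal_ne_top
end

section
/- Let R > 0 and let Ω = {(u,v) ∈ ℂ^m × ℂ^m : |u| < R, |v| < R}. If F : Ω → ℂ is holomorphic and F(u, ū) = 0 for every u with |u| < R, where ū denotes coordinatewise complex conjugation, then F is identically zero on Ω. (The set {(u, ū) : |u| < R} is maximally totally real in ℂ^{2m}.) -/
open Complex Set Metric Filter Topology

lemma diff_update {n : ℕ} (w : Fin n → ℂ) (k : Fin n) :
    Differentiable ℂ (fun z : ℂ => Function.update w k z) := by
  rw [differentiable_pi]
  intro j
  simp only [Function.update_apply]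
  by_cases h : j = k
  · simp only [h, if_pos rfl]; exact differentiable_id
  · simp only [if_neg h]; exact differentiable_const (w j)

lemma polydisc_vanish {n : ℕ} {r : ℝ} (hr : 0 < r) {g : (Fin n → ℂ) → ℂ}
    (hg : DifferentiableOn ℂ g {w | ∀ j, ‖w j‖ < r})
    (h0 : ∀ w : Fin n → ℂ, (∀ j, ‖w j‖ < r) → (∀ j, (w j).im = 0) → g w = 0) :
    ∀ w : Fin n → ℂ, (∀ j, ‖w j‖ < r) → g w = 0 := by
  have key : ∀ k : ℕ, ∀ w : Fin n → ℂ, (∀ j, ‖w j‖ < r) →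
      (∀ j : Fin n, k ≤ (j : ℕ) → (w j).im = 0) → g w = 0 := by
    intro k
    induction k with
    | zero => intro w hw him; exact h0 w hw fun j => him j (Nat.zero_le _)
    | succ k ih =>
      intro w hw him
      by_cases hk : k < n
      · set jk : Fin n := ⟨k, hk⟩
        set h : ℂ → ℂ := fun z => g (Function.update w jk z) with hh
        have hmaps : ∀ z ∈ ball (0:ℂ) r, ∀ j, ‖(Function.update w jk z) j‖ < r := by
          intro z hz j
          rcases eq_or_ne j jk with rfl | hj
          · simpa using mem_ball_zero_iff.mp hz
          · simpa [Function.update_apply, hj] using hw j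
        have hdiff : DifferentiableOn ℂ h (ball (0:ℂ) r) := by
          apply hg.comp ((diff_update w jk).differentiableOn)
          intro z hz; exact hmaps z hz
        have hanal : AnalyticOnNhd ℂ h (ball (0:ℂ) r) :=
          hdiff.analyticOnNhd isOpen_ball
        have hreal : ∀ t : ℝ, ‖(t : ℂ)‖ < r → h t = 0 := by
          intro t ht
          apply ih _ (hmaps _ (by simpa using ht))
          intro j hj
          rcases eq_or_ne j jk with rfl | hjk
          · simp
          · have hne : (j : ℕ) ≠ k := fun h' => hjk (Fin.ext h')
            have : k + 1 ≤ (j : ℕ) := by omega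
            simp only [Function.update_apply, if_neg hjk]
            exact him j this
        have hfreq : ∃ᶠ z in 𝓝[≠] (0:ℂ), h z = 0 := by
          have htend : Tendsto (fun n : ℕ => ((r / (2 * (n + 1)) : ℝ) : ℂ)) atTop (𝓝[≠] (0:ℂ)) := by
            apply tendsto_nhdsWithin_of_tendsto_nhds_of_eventually_within
            · have : Tendsto (fun n : ℕ => (r / (2 * (n + 1)) : ℝ)) atTop (𝓝 0) := by
                apply Tendsto.div_atTop tendsto_const_nhds
                apply Tendsto.const_mul_atTop two_pos
                exact tendsto_atTop_add_const_right _ 1 tendsto_natCast_atTop_atTop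
              exact (Complex.continuous_ofReal.tendsto 0).comp (by simpa using this)
            · filter_upwards with n
              have hpos : (0:ℝ) < r / (2 * (n + 1)) := by positivity
              simp only [mem_compl_iff, mem_singleton_iff, Complex.ofReal_eq_zero]
              exact ne_of_gt hpos
          apply htend.frequently
          apply Filter.Frequently.of_forall
          intro n
          apply hreal
          simp only [Complex.norm_real, Real.norm_eq_abs]
          rw [abs_of_pos (by positivity)]
          exact div_lt_self hr (by nlinarith [Nat.cast_nonneg (α := ℝ) n])

        have := hanal.eqOn_zero_of_preconnected_of_frequently_eq_zero
          (convex_ball (0:ℂ) r).isPreconnected (mem_ball_self hr) hfreq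
        have hz := this (mem_ball_zero_iff.mpr (by simpa using hw jk))
        simpa [hh, Function.update_eq_self] using hz
      · apply ih _ hw
        intro j hj
        have := j.isLt
        omega
  intro w hw
  exact key n w hw fun j hj => absurd j.isLt (by omega)

lemma euclNorm_le {m : ℕ} {z : Fin m → ℂ} {c : ℝ} (hc : 0 ≤ c)
    (h : ∀ j, ‖z j‖ ≤ c) :
    euclNorm z ≤ Real.sqrt m * c := by
  have hsum : ∑ j, ‖z j‖ ^ 2 ≤ (m : ℝ) * c ^ 2 := by
    calc ∑ j, ‖z j‖ ^ 2 ≤ ∑ _j : Fin m, c ^ 2 :=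
          Finset.sum_le_sum fun j _ => pow_le_pow_left₀ (norm_nonneg _) (h j) 2
      _ = (m : ℝ) * c ^ 2 := by simp [Finset.sum_const, Finset.card_fin]
  calc euclNorm z ≤ Real.sqrt ((m : ℝ) * c ^ 2) := Real.sqrt_le_sqrt hsum
    _ = Real.sqrt m * c := by
        rw [Real.sqrt_mul (Nat.cast_nonneg m), Real.sqrt_sq hc]

lemma euclNorm_smul {m : ℕ} (z : ℂ) (u : Fin m → ℂ) :
    euclNorm (z • u) = ‖z‖ * euclNorm u := by
  unfold euclNorm
  have h : ∑ j, ‖(z • u) j‖ ^ 2 = ‖z‖ ^ 2 * ∑ j, ‖u j‖ ^ 2 := by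
    rw [Finset.mul_sum]
    exact Finset.sum_congr rfl fun j _ => by
      simp only [Pi.smul_apply, smul_eq_mul, norm_mul, mul_pow]
  rw [h, Real.sqrt_mul (sq_nonneg _), Real.sqrt_sq (norm_nonneg z)]

/-- **Uniqueness along a maximally totally real set.**
If `F` is holomorphic on `Ω = {(u,v) : |u| < R, |v| < R} ⊆ ℂ^m × ℂ^m` and vanishes on
`{(u, ū) : |u| < R}` (a maximally totally real subset), then `F ≡ 0` on `Ω`. -/
theorem holomorphic_vanishing_on_totally_real
    (m : ℕ) (R : ℝ) (hR : 0 < R)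
    (F : (Fin m → ℂ) × (Fin m → ℂ) → ℂ)
    (hF : DifferentiableOn ℂ F
      {p : (Fin m → ℂ) × (Fin m → ℂ) | euclNorm p.1 < R ∧ euclNorm p.2 < R})
    (hvanish : ∀ u : Fin m → ℂ, euclNorm u < R →
      F (u, fun j => (starRingEnd ℂ) (u j)) = 0) :
    ∀ p : (Fin m → ℂ) × (Fin m → ℂ), euclNorm p.1 < R → euclNorm p.2 < R → F p = 0 := by
  set Ω : Set ((Fin m → ℂ) × (Fin m → ℂ)) :=
    {p | euclNorm p.1 < R ∧ euclNorm p.2 < R} with hΩ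
  -- the radius
  set r : ℝ := R / (2 * (Real.sqrt m + 1)) with hrdef
  have hsm : (0:ℝ) ≤ Real.sqrt m := Real.sqrt_nonneg _
  have hrpos : 0 < r := by positivity
  have hkey : Real.sqrt m * (2 * r) < R := by
    have h1 : r * (2 * (Real.sqrt m + 1)) = R := by
      rw [hrdef]; field_simp
    nlinarith
  -- the composition map
  set T : (Fin (m + m) → ℂ) → (Fin m → ℂ) × (Fin m → ℂ) :=
    fun w => (fun j => w (Fin.castAdd m j) + Complex.I * w (Fin.natAdd m j),
              fun j => w (Fin.castAdd m j) - Complex.I * w (Fin.natAdd m j)) with hT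
  have hTdiff : Differentiable ℂ T := by
    apply Differentiable.prodMk
    · rw [differentiable_pi]
      intro j
      exact (differentiable_apply _).add ((differentiable_apply _).const_mul _)
    · rw [differentiable_pi]
      intro j
      exact (differentiable_apply _).sub ((differentiable_apply _).const_mul _)
  have hTmaps : ∀ w : Fin (m + m) → ℂ, (∀ j, ‖w j‖ < r) → T w ∈ Ω := by
    intro w hw
    constructor
    · apply lt_of_le_of_lt (euclNorm_le (c := 2 * r) (by positivity) fun j => ?_) hkey
      calc ‖w (Fin.castAdd m j) + Complex.I * w (Fin.natAdd m j)‖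
          ≤ ‖w (Fin.castAdd m j)‖ + ‖Complex.I * w (Fin.natAdd m j)‖ :=
            norm_add_le _ _
        _ ≤ r + r := by
            rw [norm_mul, Complex.norm_I, one_mul]
            exact add_le_add (hw _).le (hw _).le
        _ = 2 * r := by ring
    · apply lt_of_le_of_lt (euclNorm_le (c := 2 * r) (by positivity) fun j => ?_) hkey
      calc ‖w (Fin.castAdd m j) - Complex.I * w (Fin.natAdd m j)‖
          ≤ ‖w (Fin.castAdd m j)‖ + ‖Complex.I * w (Fin.natAdd m j)‖ :=
            norm_sub_le _ _
        _ ≤ r + r := by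
            rw [norm_mul, Complex.norm_I, one_mul]
            exact add_le_add (hw _).le (hw _).le
        _ = 2 * r := by ring
  -- g vanishes on the polydisc
  have hgdiff : DifferentiableOn ℂ (F ∘ T) {w | ∀ j, ‖w j‖ < r} :=
    hF.comp hTdiff.differentiableOn fun w hw => hTmaps w hw
  have hg0 : ∀ w : Fin (m + m) → ℂ, (∀ j, ‖w j‖ < r) →
      (∀ j, (w j).im = 0) → (F ∘ T) w = 0 := by
    intro w hw him
    have hu : euclNorm (T w).1 < R := (hTmaps w hw).1
    have hconj : (T w).2 = fun j => (starRingEnd ℂ) ((T w).1 j) := by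
      funext j
      simp only [hT]
      rw [map_add, map_mul, Complex.conj_I,
        Complex.conj_eq_iff_im.mpr (him (Fin.castAdd m j)),
        Complex.conj_eq_iff_im.mpr (him (Fin.natAdd m j))]
      ring
    have := hvanish (T w).1 hu
    calc (F ∘ T) w = F ((T w).1, (T w).2) := rfl
      _ = F ((T w).1, fun j => (starRingEnd ℂ) ((T w).1 j)) := by rw [hconj]
      _ = 0 := this
  have hgzero := polydisc_vanish hrpos hgdiff hg0
  -- F vanishes on a small ball around 0
  have hsmall : ∀ p : (Fin m → ℂ) × (Fin m → ℂ), ‖p‖ < r → F p = 0 := by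
    intro p hp'
    have hb1 : ∀ j, ‖p.1 j‖ < r := fun j =>
      lt_of_le_of_lt ((norm_le_pi_norm p.1 j).trans (norm_fst_le p)) hp'
    have hb2 : ∀ j, ‖p.2 j‖ < r := fun j =>
      lt_of_le_of_lt ((norm_le_pi_norm p.2 j).trans (norm_snd_le p)) hp'
    set x : Fin m → ℂ := fun j => (p.1 j + p.2 j) / 2 with hx
    set y : Fin m → ℂ := fun j => (p.1 j - p.2 j) / (2 * Complex.I) with hy
    set w : Fin (m + m) → ℂ := Fin.append x y with hwdef
    have hwball : ∀ j, ‖w j‖ < r := by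
      refine Fin.addCases ?_ ?_
      · intro i
        rw [hwdef, Fin.append_left, hx]
        rw [norm_div, Complex.norm_two, div_lt_iff₀ two_pos]
        calc ‖p.1 i + p.2 i‖ ≤ ‖p.1 i‖ + ‖p.2 i‖ :=
              norm_add_le _ _
          _ < r + r := add_lt_add (hb1 i) (hb2 i)
          _ = r * 2 := by ring
      · intro i
        rw [hwdef, Fin.append_right, hy]
        rw [norm_div, norm_mul, Complex.norm_two, Complex.norm_I, mul_one, div_lt_iff₀ two_pos]
        calc ‖p.1 i - p.2 i‖ ≤ ‖p.1 i‖ + ‖p.2 i‖ :=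
              norm_sub_le _ _
          _ < r + r := add_lt_add (hb1 i) (hb2 i)
          _ = r * 2 := by ring
    have hI : (Complex.I : ℂ) ≠ 0 := Complex.I_ne_zero
    have hTw : T w = p := by
      apply Prod.ext
      · funext j
        simp only [hT, hwdef, Fin.append_left, Fin.append_right, hx, hy]
        field_simp
        ring
      · funext j
        simp only [hT, hwdef, Fin.append_left, Fin.append_right, hx, hy]
        field_simp
        ring
    have := hgzero w hwball
    rw [Function.comp_apply, hTw] at this
    exact this
  -- propagate along complex lines
  intro p h1 h2
  set c : ℝ := max (max (euclNorm p.1) (euclNorm p.2)) (R / 2) with hc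
  have hcpos : 0 < c := lt_of_lt_of_le (by positivity) (le_max_right _ _)
  have hcR : c < R := by
    rw [hc]
    apply max_lt (max_lt h1 h2)
    linarith
  set f : ℂ → ℂ := fun z => F (z • p) with hf
  have hmaps : ∀ z : ℂ, z ∈ ball (0:ℂ) (R / c) → z • p ∈ Ω := by
    intro z hz
    have habs : ‖z‖ < R / c := by simpa using mem_ball_zero_iff.mp hz
    have hz1 : ‖z‖ * euclNorm p.1 < R := by
      calc ‖z‖ * euclNorm p.1 ≤ ‖z‖ * c :=
            mul_le_mul_of_nonneg_left (le_trans (le_max_left _ _) (le_max_left _ _))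
              (norm_nonneg z)
        _ < (R / c) * c := by
            apply mul_lt_mul_of_pos_right habs hcpos
        _ = R := by field_simp
    have hz2 : ‖z‖ * euclNorm p.2 < R := by
      calc ‖z‖ * euclNorm p.2 ≤ ‖z‖ * c :=
            mul_le_mul_of_nonneg_left (le_trans (le_max_right _ _) (le_max_left _ _))
              (norm_nonneg z)
        _ < (R / c) * c := mul_lt_mul_of_pos_right habs hcpos
        _ = R := by field_simp
    constructor
    · rw [Prod.smul_fst, euclNorm_smul]; exact hz1
    · rw [Prod.smul_snd, euclNorm_smul]; exact hz2
  have hfd : DifferentiableOn ℂ f (ball (0:ℂ) (R / c)) := by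
    apply hF.comp (Differentiable.differentiableOn ?_) hmaps
    exact differentiable_id.smul_const p
  have hfa : AnalyticOnNhd ℂ f (ball (0:ℂ) (R / c)) := hfd.analyticOnNhd isOpen_ball
  have hev : f =ᶠ[𝓝 (0:ℂ)] 0 := by
    have hε : 0 < r / (‖p‖ + 1) := by positivity
    filter_upwards [Metric.ball_mem_nhds (0:ℂ) hε] with z hz
    show F (z • p) = 0
    apply hsmall
    rw [norm_smul]
    have hz' : ‖z‖ < r / (‖p‖ + 1) := mem_ball_zero_iff.mp hz
    calc ‖z‖ * ‖p‖ ≤ ‖z‖ * (‖p‖ + 1) := by nlinarith [norm_nonneg z, norm_nonneg p]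
      _ < (r / (‖p‖ + 1)) * (‖p‖ + 1) := mul_lt_mul_of_pos_right hz' (by positivity)
      _ = r := by field_simp
  have h0ball : (0:ℂ) ∈ ball (0:ℂ) (R / c) := mem_ball_self (by positivity)
  have hEq := hfa.eqOn_zero_of_preconnected_of_eventuallyEq_zero
    (convex_ball (0:ℂ) (R / c)).isPreconnected h0ball hev
  have h1ball : (1:ℂ) ∈ ball (0:ℂ) (R / c) := by
    rw [mem_ball_zero_iff]
    simp only [norm_one]
    rw [lt_div_iff₀ hcpos, one_mul]
    exact hcR
  have := hEq h1ball
  simpa [hf] using this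
end
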